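/- For any ω ∈ L¹(ℝ²) and λ > 0, the function λ ∇^⊥(-Δ)^{-1}(λ-Δ)^{-1} ω satisfies ‖λ ∇^⊥(-Δ)^{-1}(λ-Δ)^{-1} ω‖_{L^∞(ℝ²)} ≲ λ^{1/2} ‖ω‖_{L¹(ℝ²)}, with constant independent of λ and ω. -/

import Mathlib

open MeasureTheory Real Set
open scoped FourierTransform

noncomputable section

/-- `ξ^⊥ = (-ξ₂, ξ₁)`, viewed as a vector in `ℂ²`. -/
def perpC (ξ : EuclideanSpace ℝ (Fin 2)) : EuclideanSpace ℂ (Fin 2) :=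
  (WithLp.equiv 2 (Fin 2 → ℂ)).symm ![(-(ξ 1) : ℂ), ((ξ 0) : ℂ)]

/-- The symbol `λ ξ^⊥/(|ξ|²(λ+|ξ|²))` of the operator `λ ∇^⊥(-Δ)^{-1}(λ-Δ)^{-1}`. -/
def symbPerp (lam : ℝ) (ξ : EuclideanSpace ℝ (Fin 2)) : EuclideanSpace ℂ (Fin 2) :=
  ((lam / (‖ξ‖ ^ 2 * (lam + ‖ξ‖ ^ 2)) : ℝ) : ℂ) • perpC ξ

lemma norm_perpC (ξ : EuclideanSpace ℝ (Fin 2)) : ‖perpC ξ‖ = ‖ξ‖ := by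
  rw [EuclideanSpace.norm_eq, EuclideanSpace.norm_eq]
  congr 1
  simp [perpC, Fin.sum_univ_two]
  ring

lemma norm_symbPerp (lam : ℝ) (ξ : EuclideanSpace ℝ (Fin 2)) :
    ‖symbPerp lam ξ‖ = |lam / (‖ξ‖ ^ 2 * (lam + ‖ξ‖ ^ 2))| * ‖ξ‖ := by
  rw [symbPerp, norm_smul, norm_perpC, Complex.norm_real, Real.norm_eq_abs]

lemma integral_radial (lam : ℝ) (hlam : 0 < lam) :
    ∫ r in Ioi (0:ℝ), lam / (lam + r ^ 2) = Real.sqrt lam * (π / 2) := by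
  have hs : 0 < Real.sqrt lam := Real.sqrt_pos.2 hlam
  have hsq : Real.sqrt lam ^ 2 = lam := Real.sq_sqrt hlam.le
  have hderiv : ∀ r ∈ Ici (0:ℝ),
      HasDerivAt (fun r => Real.sqrt lam * Real.arctan (r / Real.sqrt lam))
        (lam / (lam + r ^ 2)) r := by
    intro r _
    have h1 : HasDerivAt (fun r : ℝ => r / Real.sqrt lam) (1 / Real.sqrt lam) r := by
      simpa using (hasDerivAt_id r).div_const (Real.sqrt lam)
    have h3 := ((Real.hasDerivAt_arctan (r / Real.sqrt lam)).comp r h1).const_mul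
      (Real.sqrt lam)
    refine h3.congr_deriv ?_
    rw [div_pow, hsq]
    field_simp
  have htend : Filter.Tendsto (fun r => Real.sqrt lam * Real.arctan (r / Real.sqrt lam))
      Filter.atTop (nhds (Real.sqrt lam * (π / 2))) := by
    apply Filter.Tendsto.const_mul
    have : Filter.Tendsto (fun r : ℝ => r / Real.sqrt lam) Filter.atTop Filter.atTop :=
      Filter.tendsto_id.atTop_div_const hs
    exact (Real.tendsto_arctan_atTop.mono_right nhdsWithin_le_nhds).comp this
  have := integral_Ioi_of_hasDerivAt_of_nonneg' hderiv
    (fun r _ => by positivity) htend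
  simpa using this

/-- The kernel is bounded pointwise by `π² √λ`. -/
lemma norm_kernel_le (lam : ℝ) (hlam : 0 < lam) (z : EuclideanSpace ℝ (Fin 2)) :
    ‖(𝓕⁻ (symbPerp lam)) z‖ ≤
      2 * (volume (Metric.ball (0 : EuclideanSpace ℝ (Fin 2)) 1)).toReal *
        (π / 2) * Real.sqrt lam := by
  have h1 : ‖(𝓕⁻ (symbPerp lam)) z‖ ≤ ∫ ξ, ‖symbPerp lam ξ‖ :=
    VectorFourier.norm_fourierIntegral_le_integral_norm _ _ _ _ _
  refine h1.trans ?_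
  have h2 : ∀ ξ : EuclideanSpace ℝ (Fin 2), ‖symbPerp lam ξ‖ =
      (fun r : ℝ => |lam / (r ^ 2 * (lam + r ^ 2))| * r) ‖ξ‖ := fun ξ => norm_symbPerp lam ξ
  calc ∫ ξ, ‖symbPerp lam ξ‖
      = ∫ ξ : EuclideanSpace ℝ (Fin 2),
          (fun r : ℝ => |lam / (r ^ 2 * (lam + r ^ 2))| * r) ‖ξ‖ := by
        exact integral_congr_ae (Filter.Eventually.of_forall h2)
    _ = Module.finrank ℝ (EuclideanSpace ℝ (Fin 2)) •
          (volume (Metric.ball (0 : EuclideanSpace ℝ (Fin 2)) 1)).toReal •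
            ∫ r in Ioi (0:ℝ),
              r ^ (Module.finrank ℝ (EuclideanSpace ℝ (Fin 2)) - 1) •
                (|lam / (r ^ 2 * (lam + r ^ 2))| * r) :=
        MeasureTheory.integral_fun_norm_addHaar
          (volume : Measure (EuclideanSpace ℝ (Fin 2)))
          (fun r : ℝ => |lam / (r ^ 2 * (lam + r ^ 2))| * r)
    _ = 2 * (volume (Metric.ball (0 : EuclideanSpace ℝ (Fin 2)) 1)).toReal *
          ∫ r in Ioi (0:ℝ), lam / (lam + r ^ 2) := by
        rw [finrank_euclideanSpace_fin]
        have : ∫ r in Ioi (0:ℝ), r ^ (2 - 1) • (|lam / (r ^ 2 * (lam + r ^ 2))| * r) =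
            ∫ r in Ioi (0:ℝ), lam / (lam + r ^ 2) := by
          apply setIntegral_congr_fun measurableSet_Ioi
          intro r hr
          have hr0 : 0 < r := hr
          have habs : |lam / (r ^ 2 * (lam + r ^ 2))| = lam / (r ^ 2 * (lam + r ^ 2)) := by
            apply abs_of_nonneg; positivity
          simp only [habs, smul_eq_mul, pow_one]
          field_simp
          ring
        rw [this]; simp [smul_eq_mul]; ring
    _ = 2 * (volume (Metric.ball (0 : EuclideanSpace ℝ (Fin 2)) 1)).toReal *
          (π / 2) * Real.sqrt lam := by
        rw [integral_radial lam hlam]; ring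
    _ ≤ 2 * (volume (Metric.ball (0 : EuclideanSpace ℝ (Fin 2)) 1)).toReal *
          (π / 2) * Real.sqrt lam := le_rfl

/-- For any `ω ∈ L¹(ℝ²)` and `λ > 0`, the function `λ ∇^⊥(-Δ)^{-1}(λ-Δ)^{-1} ω`,
realized as the convolution of `ω` with the kernel `K_λ = 𝓕⁻¹(symbPerp λ)`, satisfies
`‖λ ∇^⊥(-Δ)^{-1}(λ-Δ)^{-1} ω‖_{L^∞} ≲ λ^{1/2} ‖ω‖_{L¹}`, with a constant independent
of `λ` and `ω`. -/
theorem conv_kernel_Linfty_bound :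
    ∃ C : ℝ, 0 < C ∧ ∀ lam : ℝ, 0 < lam →
      ∀ ω : EuclideanSpace ℝ (Fin 2) → ℝ, Integrable ω →
        ∀ x : EuclideanSpace ℝ (Fin 2),
          ‖∫ y, ω y • (𝓕⁻ (symbPerp lam)) (x - y)‖ ≤
            C * Real.sqrt lam * ∫ y, |ω y| := by
  set V := (volume (Metric.ball (0 : EuclideanSpace ℝ (Fin 2)) 1)).toReal with hV
  have hVpos : 0 < V := ENNReal.toReal_pos
    (Metric.measure_ball_pos volume 0 one_pos).ne' measure_ball_lt_top.ne
  refine ⟨2 * V * (π / 2), by positivity, fun lam hlam ω hω x => ?_⟩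
  set C := 2 * V * (π / 2) with hC
  have hCpos : 0 < C := by positivity
  have hker : ∀ z, ‖(𝓕⁻ (symbPerp lam)) z‖ ≤ C * Real.sqrt lam := fun z =>
    norm_kernel_le lam hlam z
  calc ‖∫ y, ω y • (𝓕⁻ (symbPerp lam)) (x - y)‖
      ≤ ∫ y, ‖ω y • (𝓕⁻ (symbPerp lam)) (x - y)‖ := norm_integral_le_integral_norm _
    _ ≤ ∫ y, |ω y| * (C * Real.sqrt lam) := by
        apply integral_mono_of_nonneg
        · exact Filter.Eventually.of_forall fun y => norm_nonneg _
        · exact (hω.abs).mul_const _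
        · refine Filter.Eventually.of_forall fun y => ?_
          dsimp only
          rw [norm_smul, Real.norm_eq_abs]
          exact mul_le_mul_of_nonneg_left (hker _) (abs_nonneg _)
    _ = C * Real.sqrt lam * ∫ y, |ω y| := by
        rw [integral_mul_const]; ring
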